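/- Let κ < λ = cf(λ) with κ⁺ < λ, let I be an ideal on κ, and let ⟨a_α : α < λ⟩ be a sequence of subsets of κ that is strictly increasing modulo I (α < β implies a_α \ a_β ∈ I and a_β \ a_α ∉ I) with κ \ a_α ∉ I for all α, and suppose there is no b ∈ P(κ) \ I with a_α ∩ b ∈ I for all α. Define f_α ∈ ^κOrd by f_α(i) = α if i ∉ a_α and f_α(i) = λ + α if i ∈ a_α. Then the constant function f with value λ + λ is a ≤_I-least upper bound of ⟨f_α : α < λ⟩ but not a ≤_I-exact upper bound of it. -/

import Mathlib

open Cardinal Set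
open scoped Classical

/-- `I` is a (proper) ideal on the index set `ι`. -/
def IsIdealOn {ι : Type} (I : Set (Set ι)) : Prop :=
  ∅ ∈ I ∧ (∀ s t : Set ι, s ⊆ t → t ∈ I → s ∈ I) ∧
    (∀ s t : Set ι, s ∈ I → t ∈ I → s ∪ t ∈ I) ∧ Set.univ ∉ I

/-- `f ≤_I g` : the set where `f` exceeds `g` is in the ideal. -/
def leMod {ι : Type} (I : Set (Set ι)) (f g : ι → Ordinal) : Prop :=
  {i | g i < f i} ∈ I

/-- `f <_I g` : the set where `f ≥ g` is in the ideal. -/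
def ltMod {ι : Type} (I : Set (Set ι)) (f g : ι → Ordinal) : Prop :=
  {i | g i ≤ f i} ∈ I

/-- the example distinguishing l.u.b. from e.u.b.
With `f_α(i) = λ + α` on `a_α` and `α` off `a_α`, the constant function
`λ + λ` is a `≤_I`-least upper bound but not a `≤_I`-exact upper bound. -/
theorem lub_not_eub_example {ι : Type} (I : Set (Set ι)) (hI : IsIdealOn I)
    (lam : Cardinal.{0}) (hreg : lam.IsRegular)
    (hk : Order.succ (#ι) < lam)
    (a : Ordinal → Set ι)
    (hinc : ∀ α β, α < lam.ord → β < lam.ord → α < β →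
      a α \ a β ∈ I ∧ a β \ a α ∉ I)
    (hco : ∀ α < lam.ord, (a α)ᶜ ∉ I)
    (hnob : ¬ ∃ b : Set ι, b ∉ I ∧ ∀ α < lam.ord, a α ∩ b ∈ I) :
    ((∀ α < lam.ord,
        leMod I (fun i => if i ∈ a α then lam.ord + α else α)
          (fun _ => lam.ord + lam.ord)) ∧
      (∀ f' : ι → Ordinal,
        (∀ α < lam.ord,
          leMod I (fun i => if i ∈ a α then lam.ord + α else α) f') →
        leMod I (fun _ => lam.ord + lam.ord) f')) ∧
    ¬ ((∀ α < lam.ord,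
        leMod I (fun i => if i ∈ a α then lam.ord + α else α)
          (fun _ => lam.ord + lam.ord)) ∧
      (∀ f' : ι → Ordinal,
        ltMod I f' (fun _ => max (lam.ord + lam.ord) 1) →
        ∃ α < lam.ord, ltMod I f'
          (fun i => max (if i ∈ a α then lam.ord + α else α) 1))) := by
  obtain ⟨hemp, hdown, hunion, huniv⟩ := hI
  have hlim : Order.IsSuccLimit (lam.ord) := Cardinal.isSuccLimit_ord hreg.1
  have hpos : (0 : Ordinal) < lam.ord := hlim.pos
  have hone : (1 : Ordinal) ≤ lam.ord := Order.one_le_iff_pos.2 hpos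
  -- upper bound
  have hub : ∀ α < lam.ord,
      leMod I (fun i => if i ∈ a α then lam.ord + α else α)
        (fun _ => lam.ord + lam.ord) := by
    intro α hα
    have he : {i : ι | (fun _ => lam.ord + lam.ord) i <
        (fun i => if i ∈ a α then lam.ord + α else α) i} = ∅ := by
      ext i
      simp only [Set.mem_setOf_eq, Set.mem_empty_iff_false, iff_false, not_lt]
      split
      · exact le_of_lt ((add_lt_add_iff_left _).2 hα)
      · exact le_of_lt (hα.trans_le le_self_add)
    unfold leMod
    rw [he]; exact hemp
  -- least upper bound
  have hlub : ∀ f' : ι → Ordinal,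
      (∀ α < lam.ord,
        leMod I (fun i => if i ∈ a α then lam.ord + α else α) f') →
      leMod I (fun _ => lam.ord + lam.ord) f' := by
    intro f' hf'
    unfold leMod
    by_contra hb
    set b : Set ι := {i | f' i < lam.ord + lam.ord} with hbdef
    have hγ : ∀ i : ι, ∃ γ, γ < lam.ord ∧
        (f' i < lam.ord + lam.ord → f' i < lam.ord + γ) := by
      intro i
      by_cases h : f' i < lam.ord + lam.ord
      · obtain ⟨γ, hγ1, hγ2⟩ := (Ordinal.lt_add_iff_of_isSuccLimit hlim).1 h
        exact ⟨γ, hγ1, fun _ => hγ2⟩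
      · exact ⟨0, hpos, fun h' => absurd h' h⟩
    choose γ hγ1 hγ2 using hγ
    have hιlam : #ι < lam := (Order.lt_succ _).trans hk
    have hsup : iSup γ < lam.ord :=
      Cardinal.iSup_lt_ord_of_isRegular hreg hιlam hγ1
    -- key : for αs ≤ α < λ, a α ∩ b ∈ I
    have key : ∀ α, α < lam.ord → iSup γ ≤ α → a α ∩ b ∈ I := by
      intro α hα hle
      refine hdown _ _ ?_ (hf' α hα)
      rintro i ⟨hia, hib⟩
      simp only [Set.mem_setOf_eq, if_pos hia]
      have h1 : f' i < lam.ord + γ i := hγ2 i hib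
      have h2 : γ i ≤ α := le_trans (Ordinal.le_iSup γ i) hle
      exact h1.trans_le (add_le_add_right h2 _)
    apply hnob
    refine ⟨b, hb, ?_⟩
    intro α hα
    rcases le_or_gt (iSup γ) α with hle | hlt
    · exact key α hα hle
    · have h1 : a α \ a (iSup γ) ∈ I := (hinc α (iSup γ) hα hsup hlt).1
      have h2 : a (iSup γ) ∩ b ∈ I := key _ hsup le_rfl
      refine hdown _ _ ?_ (hunion _ _ h1 h2)
      rintro i ⟨hia, hib⟩
      by_cases h : i ∈ a (iSup γ)
      · exact Or.inr ⟨h, hib⟩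
      · exact Or.inl ⟨hia, h⟩
  refine ⟨⟨hub, hlub⟩, ?_⟩
  rintro ⟨-, heub⟩
  have h1 : ltMod I (fun _ => lam.ord) (fun _ => max (lam.ord + lam.ord) 1) := by
    unfold ltMod
    have he : {i : ι | (fun _ => max (lam.ord + lam.ord) 1) i ≤
        (fun _ : ι => lam.ord) i} = ∅ := by
      ext i
      simp only [Set.mem_setOf_eq, Set.mem_empty_iff_false, iff_false, not_le,
        lt_max_iff]
      left
      have : lam.ord + 0 < lam.ord + lam.ord :=
        (add_lt_add_iff_left _).2 hpos
      simpa using this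
    rw [he]; exact hemp
  obtain ⟨α, hα, hlt⟩ := heub (fun _ => lam.ord) h1
  unfold ltMod at hlt
  refine hco α hα (hdown _ _ ?_ hlt)
  intro i hi
  simp only [Set.mem_setOf_eq, if_neg hi]
  exact max_le (le_of_lt hα) hone
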